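/- For each κ ∈ {+,−}, the set C_{λ₀}^κ(F) is connected and equals the closure in Ω of ⋃_{0<ε<S} C_{λ₀,ε}^κ. -/

import Mathlib

open Set Topology

/-- A map `G` is compact on `B` if it is continuous on `B` and maps bounded closed
subsets of the ambient space contained in `B` to relatively compact sets. -/
def IsCompactMapOn {E F : Type*} [NormedAddCommGroup E] [NormedSpace ℝ E]
    [NormedAddCommGroup F] [NormedSpace ℝ F] (G : E → F) (B : Set E) : Prop :=
  ContinuousOn G B ∧
    ∀ A : Set E, A ⊆ B → Bornology.IsBounded A → IsClosed A → IsCompact (closure (G '' A))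

variable {X : Type*} [NormedAddCommGroup X] [NormedSpace ℝ X]

/-- The nonlinear map `F(x, λ) = x - λ K x - H (x, λ)`. -/
noncomputable def Fmap (K : X →L[ℝ] X) (H : X × ℝ → X) : X × ℝ → X :=
  fun p => p.1 - p.2 • K p.1 - H p

open Classical in
/-- The map `h(x, λ) = ‖x‖⁻¹ H(x,λ)` for `x ≠ 0`, `0` otherwise. -/
noncomputable def hmap (H : X × ℝ → X) : X × ℝ → X :=
  fun p => if p.1 = 0 then 0 else ‖p.1‖⁻¹ • H p

/-- `μ` is a characteristic value of `K` if `μ⁻¹` is an eigenvalue of `K`. -/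
def CharVal (K : X →L[ℝ] X) (μ : ℝ) : Prop :=
  Module.End.HasEigenvalue (K : X →ₗ[ℝ] X) μ⁻¹

/-- The multiplicity of a characteristic value `μ`: the dimension of the generalized
eigenspace `⋃_k ker((μ⁻¹ • I - K)^k)` of `K` for the eigenvalue `μ⁻¹`. -/
noncomputable def charMult (K : X →L[ℝ] X) (μ : ℝ) : ℕ :=
  Module.finrank ℝ (Module.End.maxGenEigenspace (K : X →ₗ[ℝ] X) μ⁻¹)

/-- `𝔖(F)`: the closure in `Ω` of the set of non-trivial solutions of `F(x,λ) = 0`. -/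
def SolClosure (F : X × ℝ → X) (Ω : Set (X × ℝ)) : Set (X × ℝ) :=
  closure {p | p ∈ Ω ∧ F p = 0 ∧ p.1 ≠ 0} ∩ Ω

/-- `C_{λ₀}(F)`: the connected component of `(0, λ₀)` in `𝔖(F) ∪ {(0, λ₀)}`. -/
noncomputable def Ccomp (F : X × ℝ → X) (Ω : Set (X × ℝ)) (lam0 : ℝ) : Set (X × ℝ) :=
  connectedComponentIn (SolClosure F Ω ∪ {((0 : X), lam0)}) ((0 : X), lam0)

/-- `𝔛_{λ₀}(r) = {(x, μ) : ‖x‖ + |λ₀ - μ| < r}`. -/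
def ball0 (X : Type*) [NormedAddCommGroup X] (lam0 r : ℝ) : Set (X × ℝ) :=
  {p | ‖p.1‖ + |lam0 - p.2| < r}

/-- The cone `𝔠_y⁺` (for `σ = 1`) resp. `𝔠_y⁻` (for `σ = -1`):
`{(x, λ) : σ l(x) > y ‖x‖}`. -/
def cone (l : X →L[ℝ] ℝ) (σ y : ℝ) : Set (X × ℝ) :=
  {p | y * ‖p.1‖ < σ * l p.1}

/-- The cone `𝔠_y = {(x, λ) : |l(x)| > y ‖x‖}`. -/
def coneAbs (l : X →L[ℝ] ℝ) (y : ℝ) : Set (X × ℝ) :=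
  {p | y * ‖p.1‖ < |l p.1|}

/-- A branch of solutions of `F(x,λ) = 0` at `(0, λ₀)` in the direction of `σ v`
(where `σ = ±1`): a connected subset `Q` of `C_{λ₀}(F)` containing `(0, λ₀)` such that
for every `y ∈ (0,1)` there is `ε_y > 0` with
`∅ ≠ Q ∩ ∂𝔛_{λ₀}(ε) ⊆ 𝔠_y^σ` for all `0 < ε < ε_y`. -/
def IsBranch (F : X × ℝ → X) (Ω : Set (X × ℝ)) (lam0 : ℝ) (l : X →L[ℝ] ℝ) (σ : ℝ)
    (Q : Set (X × ℝ)) : Prop :=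
  Q ⊆ Ccomp F Ω lam0 ∧ IsPreconnected Q ∧ ((0 : X), lam0) ∈ Q ∧
    ∀ y ∈ Ioo (0 : ℝ) 1, ∃ εy > 0, ∀ ε, 0 < ε → ε < εy →
      (Q ∩ frontier (ball0 X lam0 ε)).Nonempty ∧
        Q ∩ frontier (ball0 X lam0 ε) ⊆ cone l σ y

/-- `C_{λ₀}^κ(F)` for `κ = σ = ±1`: the closure in `Ω` of the union of `{(0, λ₀)}` and
all branches of solutions in the direction of `σ v`. -/
noncomputable def Cdir (F : X × ℝ → X) (Ω : Set (X × ℝ)) (lam0 : ℝ) (l : X →L[ℝ] ℝ)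
    (σ : ℝ) : Set (X × ℝ) :=
  closure ({((0 : X), lam0)} ∪ ⋃₀ {Q | IsBranch F Ω lam0 l σ Q}) ∩ Ω

/-- `C_{λ₀,ε}^κ` for `κ = σ = ±1`: the connected component of `(0, λ₀)` in
`C_{λ₀}(F) \ (𝔛_{λ₀}(ε) ∩ 𝔠_y^{-κ})`. -/
noncomputable def Cloc (F : X × ℝ → X) (Ω : Set (X × ℝ)) (lam0 : ℝ) (l : X →L[ℝ] ℝ)
    (y σ ε : ℝ) : Set (X × ℝ) :=
  connectedComponentIn (Ccomp F Ω lam0 \ (ball0 X lam0 ε ∩ cone l (-σ) y)) ((0 : X), lam0)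


section MyAux
set_option linter.unusedSectionVars false

variable {X : Type*} [NormedAddCommGroup X] [NormedSpace ℝ X] {lam0 r : ℝ}

lemma normf_cont (lam0 : ℝ) : Continuous (fun p : X × ℝ => ‖p.1‖ + |lam0 - p.2|) := by
  fun_prop

lemma normf_nonneg (lam0 : ℝ) (p : X × ℝ) : 0 ≤ ‖p.1‖ + |lam0 - p.2| :=
  add_nonneg (norm_nonneg _) (abs_nonneg _)

lemma normf_eq_zero {lam0 : ℝ} {p : X × ℝ} (h : ‖p.1‖ + |lam0 - p.2| = 0) :
    p = ((0 : X), lam0) := by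
  have h1 : ‖p.1‖ = 0 := le_antisymm (by nlinarith [abs_nonneg (lam0 - p.2)]) (norm_nonneg _)
  have h2 : |lam0 - p.2| = 0 := by linarith
  have : p.2 = lam0 := by
    have := abs_eq_zero.mp h2; linarith
  exact Prod.ext (norm_eq_zero.mp h1) (by simpa using this)

lemma normf_pt (lam0 : ℝ) : ‖(((0:X), lam0) : X × ℝ).1‖ + |lam0 - (((0:X), lam0) : X × ℝ).2| = 0 := by
  simp

lemma ball0_isOpen : IsOpen (ball0 X lam0 r) :=
  isOpen_lt (normf_cont lam0) continuous_const

lemma frontier_ball0_subset :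
    frontier (ball0 X lam0 r) ⊆ {p : X × ℝ | ‖p.1‖ + |lam0 - p.2| = r} := by
  intro p hp
  rcases hp with ⟨h1, h2⟩
  have hle : ‖p.1‖ + |lam0 - p.2| ≤ r := by
    have : closure (ball0 X lam0 r) ⊆ {p : X × ℝ | ‖p.1‖ + |lam0 - p.2| ≤ r} :=
      closure_minimal (fun q (hq : _ < r) => le_of_lt hq)
        (isClosed_le (normf_cont lam0) continuous_const)
    exact this h1
  have hnot : ¬ (‖p.1‖ + |lam0 - p.2| < r) := by
    rw [ball0_isOpen.interior_eq] at h2; exact h2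
  exact le_antisymm hle (not_lt.mp hnot)

lemma mem_frontier_ball0 {q : X × ℝ} (hr : 0 < r) (h : ‖q.1‖ + |lam0 - q.2| = r) :
    q ∈ frontier (ball0 X lam0 r) := by
  constructor
  · have key : Filter.Tendsto (fun n : ℕ => ((1 - 1/(n+1 : ℝ)) • q.1,
        lam0 + (1 - 1/(n+1 : ℝ)) * (q.2 - lam0))) Filter.atTop (𝓝 q) := by
      have ht : Filter.Tendsto (fun n : ℕ => (1 - 1/(n+1 : ℝ))) Filter.atTop (𝓝 1) := by
        have := tendsto_one_div_add_atTop_nhds_zero_nat (𝕜 := ℝ)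
        simpa using (tendsto_const_nhds (x := (1:ℝ))).sub this
      have h1 : Filter.Tendsto (fun n : ℕ => (1 - 1/(n+1 : ℝ)) • q.1) Filter.atTop (𝓝 q.1) := by
        simpa using ht.smul (tendsto_const_nhds (x := q.1))
      have h2 : Filter.Tendsto (fun n : ℕ => lam0 + (1 - 1/(n+1 : ℝ)) * (q.2 - lam0))
          Filter.atTop (𝓝 q.2) := by
        have := (tendsto_const_nhds (x := lam0)).add (ht.mul (tendsto_const_nhds (x := q.2 - lam0)))
        simpa using this
      exact h1.prodMk_nhds h2
    refine mem_closure_of_tendsto key (Filter.Eventually.of_forall fun n => ?_)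
    have htn0 : (0:ℝ) ≤ 1 - 1/(n+1 : ℝ) := by
      have : 1/(n+1:ℝ) ≤ 1 := by
        rw [div_le_one (by positivity)]; linarith [Nat.cast_nonneg (α := ℝ) n]
      linarith
    have htn1 : 1 - 1/(n+1 : ℝ) < 1 := by
      have : 0 < 1/(n+1:ℝ) := by positivity
      linarith
    show ‖(1 - 1/(n+1 : ℝ)) • q.1‖ + |lam0 - (lam0 + (1 - 1/(n+1 : ℝ)) * (q.2 - lam0))| < r
    have e1 : ‖(1 - 1/(n+1 : ℝ)) • q.1‖ = (1 - 1/(n+1 : ℝ)) * ‖q.1‖ := by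
      rw [norm_smul, Real.norm_eq_abs, abs_of_nonneg htn0]
    have e2 : |lam0 - (lam0 + (1 - 1/(n+1 : ℝ)) * (q.2 - lam0))|
        = (1 - 1/(n+1 : ℝ)) * |lam0 - q.2| := by
      rw [show lam0 - (lam0 + (1 - 1/(n+1 : ℝ)) * (q.2 - lam0))
          = (1 - 1/(n+1 : ℝ)) * (lam0 - q.2) by ring, abs_mul, abs_of_nonneg htn0]
    rw [e1, e2, ← mul_add, h]
    calc (1 - 1/(n+1 : ℝ)) * r < 1 * r := mul_lt_mul_of_pos_right htn1 hr
      _ = r := one_mul r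
  · rw [ball0_isOpen.interior_eq]
    show ¬ (‖q.1‖ + |lam0 - q.2| < r)
    rw [h]; exact lt_irrefl r

/-! ### Cone lemmas -/

lemma mem_cone_iff {l : X →L[ℝ] ℝ} {σ y : ℝ} {p : X × ℝ} :
    p ∈ cone l σ y ↔ y * ‖p.1‖ < σ * l p.1 := Iff.rfl

lemma pt_not_mem_cone {l : X →L[ℝ] ℝ} {σ y : ℝ} (lam : ℝ) :
    (((0:X), lam) : X × ℝ) ∉ cone l σ y := by
  rw [mem_cone_iff]; simp

lemma not_mem_cone_neg {l : X →L[ℝ] ℝ} {σ y : ℝ} (hy : 0 < y) {p : X × ℝ}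
    (hp : p ∈ cone l σ y) : p ∉ cone l (-σ) y := by
  rw [mem_cone_iff] at hp ⊢
  intro h
  have h0 : 0 ≤ y * ‖p.1‖ := mul_nonneg hy.le (norm_nonneg _)
  nlinarith

lemma coneAbs_subset {l : X →L[ℝ] ℝ} {σ y : ℝ} (hσ : σ = 1 ∨ σ = -1) {p : X × ℝ}
    (hp : p ∈ coneAbs l y) : p ∈ cone l σ y ∨ p ∈ cone l (-σ) y := by
  have hp' : y * ‖p.1‖ < |l p.1| := hp
  rcases lt_abs.mp hp' with h | h
  · rcases hσ with h1 | h1 <;> subst h1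
    · left; rw [mem_cone_iff]; linarith
    · right; rw [mem_cone_iff]; simpa using h
  · rcases hσ with h1 | h1 <;> subst h1
    · right; rw [mem_cone_iff]; simpa using h
    · left; rw [mem_cone_iff]; linarith

lemma ne_zero_of_mem_cone {l : X →L[ℝ] ℝ} {σ y : ℝ} {p : X × ℝ}
    (hp : p ∈ cone l σ y) : p.1 ≠ 0 := by
  intro h
  have := mem_cone_iff.mp hp
  rw [h] at this; simp at this

/-! ### Solutions -/

lemma fmap_continuousOn {K : X →L[ℝ] X} {H : X × ℝ → X} {Ω : Set (X × ℝ)}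
    (hH : ContinuousOn H Ω) : ContinuousOn (Fmap K H) Ω := by
  have h1 : Continuous (fun p : X × ℝ => p.1 - p.2 • K p.1) :=
    continuous_fst.sub (continuous_snd.smul (K.continuous.comp continuous_fst))
  exact (h1.continuousOn).sub hH

lemma solClosure_sol {K : X →L[ℝ] X} {H : X × ℝ → X} {Ω : Set (X × ℝ)}
    (hH : ContinuousOn H Ω) {p : X × ℝ} (hp : p ∈ SolClosure (Fmap K H) Ω) :
    p ∈ Ω ∧ Fmap K H p = 0 := by
  obtain ⟨hcl, hΩ⟩ := hp
  refine ⟨hΩ, ?_⟩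
  have hsub : {q : X × ℝ | q ∈ Ω ∧ Fmap K H q = 0 ∧ q.1 ≠ 0} ⊆ Ω := fun q hq => hq.1
  have hcw : ContinuousWithinAt (Fmap K H) {q : X × ℝ | q ∈ Ω ∧ Fmap K H q = 0 ∧ q.1 ≠ 0} p :=
    ((fmap_continuousOn hH) p hΩ).mono hsub
  have := hcw.mem_closure_image hcl
  have himg : Fmap K H '' {q : X × ℝ | q ∈ Ω ∧ Fmap K H q = 0 ∧ q.1 ≠ 0} ⊆ {0} := by
    rintro z ⟨q, hq, rfl⟩; exact hq.2.1
  have : Fmap K H p ∈ closure ({0} : Set X) := closure_mono himg this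
  simpa using this

lemma key_cone {K : X →L[ℝ] X} {H : X × ℝ → X} {Ω : Set (X × ℝ)}
    (hΩ : Ω ∈ 𝓝 ((0 : X), lam0))
    (hK : IsCompactOperator K) (hHc : ContinuousOn H Ω) (hh : ContinuousOn (hmap H) Ω)
    (hsimple : charMult K lam0 = 1)
    {v : X} (hv : ‖v‖ = 1) (hKv : K v = lam0⁻¹ • v)
    {l : X →L[ℝ] ℝ} (hlv : l v = 1)
    {y : ℝ} (hy : 0 < y) {σ : ℝ} (hσ : σ = 1 ∨ σ = -1)
    {y' : ℝ} (hy' : y' ∈ Set.Ioo (0:ℝ) 1) :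
    ∃ ε' > 0, ∀ p ∈ SolClosure (Fmap K H) Ω,
      ‖p.1‖ + |lam0 - p.2| < ε' → p ∈ cone l σ y → p ∈ cone l σ y' := by
  by_contra hcon
  push_neg at hcon
  choose p hpS hpf hpy hpny using fun n : ℕ => hcon (1/(n+1 : ℝ)) (by positivity)
  have hsol : ∀ n, p n ∈ Ω ∧ Fmap K H (p n) = 0 := fun n => solClosure_sol hHc (hpS n)
  have hx0 : ∀ n, (p n).1 ≠ 0 := fun n => ne_zero_of_mem_cone (hpy n)
  have hxn : ∀ n, (0:ℝ) < ‖(p n).1‖ := fun n => norm_pos_iff.mpr (hx0 n)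
  set u : ℕ → X := fun n => ‖(p n).1‖⁻¹ • (p n).1 with hudef
  have hun : ∀ n, ‖u n‖ = 1 := fun n => by
    rw [hudef]
    simp only [norm_smul, norm_inv, norm_norm]
    exact inv_mul_cancel₀ (hxn n).ne'
  -- the rescaled equation
  have heq : ∀ n, u n = (p n).2 • K (u n) + hmap H (p n) := by
    intro n
    have h0 : (p n).1 - (p n).2 • K ((p n).1) - H (p n) = 0 := (hsol n).2
    rw [sub_sub, sub_eq_zero] at h0
    have hKu : K (u n) = ‖(p n).1‖⁻¹ • K ((p n).1) := by rw [hudef]; simp [map_smul]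
    rw [hmap, if_neg (hx0 n), hKu, smul_comm ((p n).2) (‖(p n).1‖⁻¹), ← smul_add]
    rw [hudef]; simp only; rw [← h0]
  -- convergence of p to the bifurcation point
  have htend0 : Filter.Tendsto (fun n => ‖(p n).1‖ + |lam0 - (p n).2|) Filter.atTop (𝓝 0) :=
    squeeze_zero (fun n => normf_nonneg lam0 (p n)) (fun n => (hpf n).le)
      tendsto_one_div_add_atTop_nhds_zero_nat
  have hxt : Filter.Tendsto (fun n => (p n).1) Filter.atTop (𝓝 0) :=
    squeeze_zero_norm (fun n => by linarith [abs_nonneg (lam0 - (p n).2), (hpf n).le]) htend0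
  have hlamt : Filter.Tendsto (fun n => (p n).2) Filter.atTop (𝓝 lam0) := by
    rw [tendsto_iff_dist_tendsto_zero]
    refine squeeze_zero (fun n => dist_nonneg) (fun n => ?_) htend0
    rw [Real.dist_eq, abs_sub_comm]
    linarith [norm_nonneg (p n).1]
  have hpt : Filter.Tendsto p Filter.atTop (𝓝 ((0:X), lam0)) := by
    have := hxt.prodMk_nhds hlamt
    simpa using this
  have hptΩ : ((0:X), lam0) ∈ Ω := mem_of_mem_nhds hΩ
  -- hmap H (p n) → 0
  have hhm : Filter.Tendsto (fun n => hmap H (p n)) Filter.atTop (𝓝 0) := by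
    have h1 : Filter.Tendsto p Filter.atTop (𝓝[Ω] ((0:X), lam0)) :=
      tendsto_nhdsWithin_iff.mpr ⟨hpt, Filter.Eventually.of_forall (fun n => (hsol n).1)⟩
    have h2 := Filter.Tendsto.comp (hh ((0:X), lam0) hptΩ) h1
    simpa [hmap, Function.comp_def] using h2
  -- compactness: extract a convergent subsequence of K (u n)
  have hK' : IsCompactOperator ⇑(K : X →ₗ[ℝ] X) := hK
  have hKcomp : IsCompact (closure ((K : X →ₗ[ℝ] X) '' Metric.closedBall 0 1)) :=
    hK'.isCompact_closure_image_closedBall 1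
  have hmem : ∀ n, K (u n) ∈ closure ((K : X →ₗ[ℝ] X) '' Metric.closedBall 0 1) := by
    intro n
    exact subset_closure ⟨u n, by simp [Metric.mem_closedBall, dist_zero_right, hun n], rfl⟩
  obtain ⟨w, -, φ, hφmono, hKuw⟩ := hKcomp.tendsto_subseq hmem
  have hKuw' : Filter.Tendsto (fun n => K (u (φ n))) Filter.atTop (𝓝 w) := hKuw
  have hlamφ : Filter.Tendsto (fun n => (p (φ n)).2) Filter.atTop (𝓝 lam0) :=
    hlamt.comp hφmono.tendsto_atTop
  have hhφ : Filter.Tendsto (fun n => hmap H (p (φ n))) Filter.atTop (𝓝 0) :=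
    hhm.comp hφmono.tendsto_atTop
  set u0 : X := lam0 • w with hu0
  have huφ : Filter.Tendsto (fun n => u (φ n)) Filter.atTop (𝓝 u0) := by
    have h1 : Filter.Tendsto (fun n => (p (φ n)).2 • K (u (φ n)) + hmap H (p (φ n)))
        Filter.atTop (𝓝 (lam0 • w + 0)) := (hlamφ.smul hKuw').add hhφ
    rw [add_zero] at h1
    exact h1.congr (fun n => (heq (φ n)).symm)
  have hnu0 : ‖u0‖ = 1 := by
    have h1 : Filter.Tendsto (fun n => ‖u (φ n)‖) Filter.atTop (𝓝 ‖u0‖) := huφ.norm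
    have h2 : Filter.Tendsto (fun n => ‖u (φ n)‖) Filter.atTop (𝓝 1) :=
      tendsto_const_nhds.congr (fun n => (hun (φ n)).symm)
    exact tendsto_nhds_unique h1 h2
  have hlam0 : lam0 ≠ 0 := by
    intro h
    rw [hu0, h, zero_smul, norm_zero] at hnu0
    exact one_ne_zero hnu0.symm
  have hKu0 : K u0 = w :=
    tendsto_nhds_unique ((K.continuous.tendsto u0).comp huφ) hKuw'
  have hKeig : K u0 = lam0⁻¹ • u0 := by
    rw [hKu0, hu0, smul_smul, inv_mul_cancel₀ hlam0, one_smul]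
  -- simple eigenvalue: u0 is a multiple of v
  have hmem_u0 : u0 ∈ Module.End.maxGenEigenspace (K : X →ₗ[ℝ] X) lam0⁻¹ := by
    rw [Module.End.mem_maxGenEigenspace]
    refine ⟨1, ?_⟩
    simp only [pow_one, LinearMap.sub_apply, LinearMap.smul_apply, Module.End.one_apply]
    rw [sub_eq_zero]
    exact hKeig
  have hmem_v : v ∈ Module.End.maxGenEigenspace (K : X →ₗ[ℝ] X) lam0⁻¹ := by
    rw [Module.End.mem_maxGenEigenspace]
    refine ⟨1, ?_⟩
    simp only [pow_one, LinearMap.sub_apply, LinearMap.smul_apply, Module.End.one_apply]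
    rw [sub_eq_zero]
    exact hKv
  have hv0 : v ≠ 0 := by
    intro h; rw [h, norm_zero] at hv; exact one_ne_zero hv.symm
  obtain ⟨c, hc⟩ := (finrank_eq_one_iff_of_nonzero'
      (⟨v, hmem_v⟩ : Module.End.maxGenEigenspace (K : X →ₗ[ℝ] X) lam0⁻¹)
      (by simpa using hv0)).mp hsimple ⟨u0, hmem_u0⟩
  have hcu : c • v = u0 := by
    have := congrArg Subtype.val hc
    simpa using this
  have hcabs : |c| = 1 := by
    rw [← hcu, norm_smul, Real.norm_eq_abs, hv, mul_one] at hnu0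
    exact hnu0
  -- cone inequalities for u n
  have hcone1 : ∀ n, y < σ * l (u n) := by
    intro n
    have h1 : y * ‖(p n).1‖ < σ * l ((p n).1) := hpy n
    have h3 := mul_lt_mul_of_pos_left h1 (inv_pos.mpr (hxn n))
    have h2 : l (u n) = ‖(p n).1‖⁻¹ * l ((p n).1) := by
      rw [hudef]; simp [map_smul, smul_eq_mul]
    have hinv : ‖(p n).1‖⁻¹ * ‖(p n).1‖ = 1 := inv_mul_cancel₀ (hxn n).ne'
    calc y = ‖(p n).1‖⁻¹ * (y * ‖(p n).1‖) := by
          rw [show ‖(p n).1‖⁻¹ * (y * ‖(p n).1‖) = (‖(p n).1‖⁻¹ * ‖(p n).1‖) * y by ring,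
            hinv, one_mul]
      _ < ‖(p n).1‖⁻¹ * (σ * l ((p n).1)) := h3
      _ = σ * l (u n) := by rw [h2]; ring
  have hcone2 : ∀ n, σ * l (u n) ≤ y' := by
    intro n
    have h1 : σ * l ((p n).1) ≤ y' * ‖(p n).1‖ := not_lt.mp (hpny n)
    have h3 := mul_le_mul_of_nonneg_left h1 (inv_pos.mpr (hxn n)).le
    have h2 : l (u n) = ‖(p n).1‖⁻¹ * l ((p n).1) := by
      rw [hudef]; simp [map_smul, smul_eq_mul]
    calc σ * l (u n) = ‖(p n).1‖⁻¹ * (σ * l ((p n).1)) := by rw [h2]; ring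
      _ ≤ ‖(p n).1‖⁻¹ * (y' * ‖(p n).1‖) := h3
      _ = y' := by
          rw [show ‖(p n).1‖⁻¹ * (y' * ‖(p n).1‖) = (‖(p n).1‖⁻¹ * ‖(p n).1‖) * y' by ring,
            inv_mul_cancel₀ (hxn n).ne', one_mul]
  -- pass to the limit
  have hl1 : Filter.Tendsto (fun n => σ * l (u (φ n))) Filter.atTop (𝓝 (σ * l u0)) :=
    tendsto_const_nhds.mul ((l.continuous.tendsto u0).comp huφ)
  have hge : y ≤ σ * l u0 := ge_of_tendsto hl1 (Filter.Eventually.of_forall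
    (fun n => (hcone1 (φ n)).le))
  have hle : σ * l u0 ≤ y' := le_of_tendsto hl1 (Filter.Eventually.of_forall
    (fun n => hcone2 (φ n)))
  have hlu0 : l u0 = c := by rw [← hcu, map_smul, smul_eq_mul, hlv, mul_one]
  have habs : |σ * c| = 1 := by
    rw [abs_mul, hcabs, mul_one]
    rcases hσ with h | h <;> simp [h]
  have hpos : 0 < σ * c := by rw [← hlu0]; linarith
  have hone : σ * c = 1 := by rwa [abs_of_pos hpos] at habs
  rw [hlu0, hone] at hle
  linarith [hy'.2]

lemma ccomp_subset {F : X × ℝ → X} {Ω : Set (X × ℝ)} {lam0 : ℝ} :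
    Ccomp F Ω lam0 ⊆ SolClosure F Ω ∪ {((0:X), lam0)} :=
  connectedComponentIn_subset _ _

lemma pt_mem_ccomp {F : X × ℝ → X} {Ω : Set (X × ℝ)} {lam0 : ℝ} :
    (((0:X), lam0) : X × ℝ) ∈ Ccomp F Ω lam0 :=
  mem_connectedComponentIn (Or.inr rfl)

lemma pt_mem_cloc {F : X × ℝ → X} {Ω : Set (X × ℝ)} {lam0 : ℝ} {l : X →L[ℝ] ℝ}
    {y σ ε : ℝ} : (((0:X), lam0) : X × ℝ) ∈ Cloc F Ω lam0 l y σ ε :=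
  mem_connectedComponentIn ⟨pt_mem_ccomp, fun hm => pt_not_mem_cone lam0 hm.2⟩

lemma branch_subset_Cloc {F : X × ℝ → X} {Ω : Set (X × ℝ)} {lam0 : ℝ}
    {l : X →L[ℝ] ℝ} {y σ : ℝ} (hy : y ∈ Set.Ioo (0:ℝ) 1) {S : ℝ} (hS0 : 0 < S)
    {Q : Set (X × ℝ)} (hQ : IsBranch F Ω lam0 l σ Q) :
    ∃ ε ∈ Set.Ioo (0:ℝ) S, Q ⊆ Cloc F Ω lam0 l y σ ε := by
  obtain ⟨hQC, hQconn, hQ0, hQb⟩ := hQ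
  obtain ⟨εy, hεy, hb⟩ := hQb y hy
  have hmin : 0 < min εy S := lt_min hεy hS0
  refine ⟨min εy S / 2, ⟨by positivity, ?_⟩, ?_⟩
  · have := min_le_right εy S; linarith
  have havoid : ∀ q ∈ Q, q ∉ ball0 X lam0 (min εy S / 2) ∩ cone l (-σ) y := by
    intro q hq hmem
    obtain ⟨hqb, hqc⟩ := hmem
    by_cases hqpt : q = ((0:X), lam0)
    · rw [hqpt] at hqc; exact pt_not_mem_cone lam0 hqc
    · have hδ0 : 0 < ‖q.1‖ + |lam0 - q.2| :=
        lt_of_le_of_ne (normf_nonneg lam0 q) (fun h => hqpt (normf_eq_zero h.symm))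
      have hδε : ‖q.1‖ + |lam0 - q.2| < εy := by
        have h1 : ‖q.1‖ + |lam0 - q.2| < min εy S / 2 := hqb
        have := min_le_left εy S; linarith
      have hqcone : q ∈ cone l σ y :=
        (hb _ hδ0 hδε).2 ⟨hq, mem_frontier_ball0 hδ0 rfl⟩
      exact not_mem_cone_neg hy.1 hqcone hqc
  exact hQconn.subset_connectedComponentIn hQ0
    (fun q hq => ⟨hQC hq, havoid q hq⟩)

lemma cloc_isBranch {K : X →L[ℝ] X} {H : X × ℝ → X} {Ω : Set (X × ℝ)} {lam0 : ℝ}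
    (hΩ : Ω ∈ 𝓝 ((0 : X), lam0))
    (hK : IsCompactOperator K) (hHc : ContinuousOn H Ω) (hh : ContinuousOn (hmap H) Ω)
    (hsimple : charMult K lam0 = 1)
    {v : X} (hv : ‖v‖ = 1) (hKv : K v = lam0⁻¹ • v)
    {l : X →L[ℝ] ℝ} (hlv : l v = 1)
    {y : ℝ} (hy : y ∈ Set.Ioo (0:ℝ) 1) {S : ℝ} (hS0 : 0 < S)
    (hScone : (SolClosure (Fmap K H) Ω ∩ closure (ball0 X lam0 S)) \ {((0 : X), lam0)}
      ⊆ coneAbs l y)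
    {σ : ℝ} (hσ : σ = 1 ∨ σ = -1) {ε : ℝ} (hε : ε ∈ Set.Ioo (0:ℝ) S)
    (hnt : ∃ q ∈ Cloc (Fmap K H) Ω lam0 l y σ ε, q ≠ ((0:X), lam0)) :
    IsBranch (Fmap K H) Ω lam0 l σ (Cloc (Fmap K H) Ω lam0 l y σ ε) := by
  refine ⟨(connectedComponentIn_subset _ _).trans diff_subset,
    isPreconnected_connectedComponentIn, pt_mem_cloc, ?_⟩
  intro y' hy'
  obtain ⟨ε', hε'0, hkey⟩ := key_cone hΩ hK hHc hh hsimple hv hKv hlv hy.1 hσ hy'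
  obtain ⟨q, hqC, hqpt⟩ := hnt
  have hδ₀ : 0 < ‖q.1‖ + |lam0 - q.2| :=
    lt_of_le_of_ne (normf_nonneg lam0 q) (fun h => hqpt (normf_eq_zero h.symm))
  refine ⟨min ε' (min ε (‖q.1‖ + |lam0 - q.2|)), lt_min hε'0 (lt_min hε.1 hδ₀), ?_⟩
  intro δ hδ0 hδlt
  have hδε' : δ < ε' := lt_of_lt_of_le hδlt (min_le_left _ _)
  have hδε : δ < ε := lt_of_lt_of_le hδlt ((min_le_right _ _).trans (min_le_left _ _))
  have hδδ₀ : δ ≤ ‖q.1‖ + |lam0 - q.2| :=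
    (lt_of_lt_of_le hδlt ((min_le_right _ _).trans (min_le_right _ _))).le
  have hδS : δ < S := lt_trans hδε hε.2
  -- cone containment
  have hcont : Cloc (Fmap K H) Ω lam0 l y σ ε ∩ frontier (ball0 X lam0 δ) ⊆ cone l σ y' := by
    rintro r ⟨hrC, hrF⟩
    have hrδ : ‖r.1‖ + |lam0 - r.2| = δ := frontier_ball0_subset hrF
    have hrpt : r ≠ ((0:X), lam0) := by
      intro h
      rw [h] at hrδ
      rw [normf_pt lam0] at hrδ
      exact absurd hrδ.symm (ne_of_gt hδ0)
    have hrCc : r ∈ Ccomp (Fmap K H) Ω lam0 \ (ball0 X lam0 ε ∩ cone l (-σ) y) :=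
      connectedComponentIn_subset _ _ hrC
    have hrS : r ∈ SolClosure (Fmap K H) Ω := by
      rcases ccomp_subset hrCc.1 with h | h
      · exact h
      · exact absurd h hrpt
    have hrabs : r ∈ coneAbs l y := by
      refine hScone ⟨⟨hrS, subset_closure ?_⟩, hrpt⟩
      show ‖r.1‖ + |lam0 - r.2| < S
      rw [hrδ]; exact hδS
    have hrb : r ∈ ball0 X lam0 ε := by show ‖r.1‖ + |lam0 - r.2| < ε; rw [hrδ]; exact hδε
    have hrcone : r ∈ cone l σ y := by
      rcases coneAbs_subset hσ hrabs with h | h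
      · exact h
      · exact absurd ⟨hrb, h⟩ hrCc.2
    exact hkey r hrS (by rw [hrδ]; exact hδε') hrcone
  refine ⟨?_, hcont⟩
  -- nonemptiness via intermediate value theorem
  have hIVT := isPreconnected_connectedComponentIn
    (F := Ccomp (Fmap K H) Ω lam0 \ (ball0 X lam0 ε ∩ cone l (-σ) y))
    (x := (((0:X), lam0) : X × ℝ))
  have himg := hIVT.intermediate_value (a := (((0:X), lam0) : X × ℝ)) (b := q)
    pt_mem_cloc hqC ((normf_cont lam0).continuousOn)
  have hmemIcc : δ ∈ Icc (‖(((0:X), lam0) : X × ℝ).1‖ + |lam0 - (((0:X), lam0) : X × ℝ).2|)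
      (‖q.1‖ + |lam0 - q.2|) := by
    rw [normf_pt lam0]
    exact ⟨hδ0.le, hδδ₀⟩
  obtain ⟨r, hrC, hrδ⟩ := himg hmemIcc
  exact ⟨r, hrC, mem_frontier_ball0 hδ0 hrδ⟩

end MyAux

/-- For each `κ ∈ {+,−}`, the set `C_{λ₀}^κ(F)` is connected and
equals the closure in `Ω` of `⋃_{0<ε<S} C_{λ₀,ε}^κ`. -/
theorem Cdir_connected_eq_closure_union
    {X : Type*} [NormedAddCommGroup X] [NormedSpace ℝ X] [CompleteSpace X]
    (lam0 : ℝ) (Ω : Set (X × ℝ)) (hΩ : Ω ∈ 𝓝 ((0 : X), lam0))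
    (K : X →L[ℝ] X) (hK : IsCompactOperator K)
    (H : X × ℝ → X) (hH : IsCompactMapOn H Ω) (hh : ContinuousOn (hmap H) Ω)
    (hchar : CharVal K lam0) (hsimple : charMult K lam0 = 1)
    (v : X) (hv : ‖v‖ = 1) (hKv : K v = lam0⁻¹ • v)
    (l : X →L[ℝ] ℝ) (hl : ∀ x : X, l (K x) = lam0⁻¹ * l x) (hlv : l v = 1)
    (y : ℝ) (hy : y ∈ Ioo (0 : ℝ) 1) (S : ℝ) (hS0 : 0 < S)
    (hSΩ : closure (ball0 X lam0 S) ⊆ interior Ω)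
    (hScone : (SolClosure (Fmap K H) Ω ∩ closure (ball0 X lam0 S)) \ {((0 : X), lam0)}
      ⊆ coneAbs l y) :
    ∀ σ : ℝ, (σ = 1 ∨ σ = -1) →
      IsConnected (Cdir (Fmap K H) Ω lam0 l σ) ∧
        Cdir (Fmap K H) Ω lam0 l σ =
          closure (⋃ ε ∈ Ioo (0 : ℝ) S, Cloc (Fmap K H) Ω lam0 l y σ ε) ∩ Ω := by
  intro σ hσ
  have hptΩ : (((0:X), lam0) : X × ℝ) ∈ Ω := mem_of_mem_nhds hΩ
  set A : Set (X × ℝ) :=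
    {(((0:X), lam0) : X × ℝ)} ∪ ⋃₀ {Q | IsBranch (Fmap K H) Ω lam0 l σ Q} with hA
  have hCdir : Cdir (Fmap K H) Ω lam0 l σ = closure A ∩ Ω := rfl
  have hCcompΩ : Ccomp (Fmap K H) Ω lam0 ⊆ Ω := by
    intro a ha
    rcases ccomp_subset ha with h | h
    · exact h.2
    · rw [mem_singleton_iff] at h; rw [h]; exact hptΩ
  have hAΩ : A ⊆ Ω := by
    intro a ha
    rcases ha with h | h
    · rw [mem_singleton_iff] at h; rw [h]; exact hptΩ
    · obtain ⟨Q, hQ, haQ⟩ := h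
      exact hCcompΩ (hQ.1 haQ)
  have hApre : IsPreconnected A := by
    have : A = ⋃₀ (insert {(((0:X), lam0) : X × ℝ)}
        {Q | IsBranch (Fmap K H) Ω lam0 l σ Q}) := by
      rw [sUnion_insert]
    rw [this]
    refine isPreconnected_sUnion (((0:X), lam0) : X × ℝ) _ ?_ ?_
    · intro s hs
      rcases mem_insert_iff.mp hs with rfl | hs
      · exact rfl
      · exact hs.2.2.1
    · intro s hs
      rcases mem_insert_iff.mp hs with rfl | hs
      · exact isPreconnected_singleton
      · exact hs.2.1
  have hptA : (((0:X), lam0) : X × ℝ) ∈ A := Or.inl rfl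
  constructor
  · -- connectedness
    rw [hCdir]
    refine ⟨⟨((0:X), lam0), subset_closure hptA, hptΩ⟩, ?_⟩
    exact hApre.subset_closure (fun a ha => ⟨subset_closure ha, hAΩ ha⟩) inter_subset_left
  · -- the equality
    rw [hCdir]
    have hAB : A ⊆ ⋃ ε ∈ Ioo (0:ℝ) S, Cloc (Fmap K H) Ω lam0 l y σ ε := by
      intro a ha
      rcases ha with h | h
      · rw [mem_singleton_iff] at h
        refine mem_biUnion (show S/2 ∈ Ioo (0:ℝ) S from ⟨by linarith, by linarith⟩) ?_
        rw [h]; exact pt_mem_cloc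
      · obtain ⟨Q, hQ, haQ⟩ := h
        obtain ⟨ε, hε, hsub⟩ := branch_subset_Cloc hy hS0 hQ
        exact mem_biUnion hε (hsub haQ)
    have hBA : (⋃ ε ∈ Ioo (0:ℝ) S, Cloc (Fmap K H) Ω lam0 l y σ ε) ⊆ A := by
      intro b hb
      obtain ⟨ε, hε, hbC⟩ := mem_iUnion₂.mp hb
      by_cases hq : ∃ q ∈ Cloc (Fmap K H) Ω lam0 l y σ ε, q ≠ (((0:X), lam0) : X × ℝ)
      · have hbr := cloc_isBranch hΩ hK hH.1 hh hsimple hv hKv hlv hy hS0 hScone hσ hε hq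
        exact Or.inr ⟨Cloc (Fmap K H) Ω lam0 l y σ ε, hbr, hbC⟩
      · push_neg at hq
        exact Or.inl (by rw [mem_singleton_iff]; exact hq b hbC)
    exact Set.Subset.antisymm
      (inter_subset_inter_left Ω (closure_mono hAB))
      (inter_subset_inter_left Ω (closure_mono hBA))
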